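/- arXiv:2007.14752 — 2 statements merged into one kernel-verified Lean document; each statement's English description precedes it below -/
import Mathlib

section
/- Let n | q - 1, α a primitive n-th root of unity in F_q, and A, B subsets of the group R_n of n-th roots of unity with AB = {ab : a ∈ A, b ∈ B}. Let C_A, C_B, C_{AB} denote the cyclic codes of length n over F_q with complete defining sets A, B, AB respectively, and let d_A⊥ be the minimum distance of the dual of C_A and d_B the minimum distance of C_B. If d_A⊥ ≥ d_B, then C_{AB} has (d_A⊥ - d_B + 1, d_B)-locality. -/
noncomputable section

open Polynomial
open scoped Pointwise

/-- The cyclic code of length `n` over `K` whose complete defining set is `Z ⊆ L`,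
where `L` is an extension of `K` containing the `n`-th roots of unity:
codewords are those `c` whose associated polynomial vanishes on `Z`. -/
def cyclicCodeOn (K L : Type) [Field K] [Field L] [Algebra K L]
    (n : ℕ) (Z : Set L) : Submodule K (Fin n → K) where
  carrier := {c | ∀ β ∈ Z, ∑ i : Fin n, algebraMap K L (c i) * β ^ (i : ℕ) = 0}
  add_mem' := by
    intro a b ha hb β hβ
    simp only [Pi.add_apply, map_add, add_mul, Finset.sum_add_distrib]
    rw [ha β hβ, hb β hβ, add_zero]
  zero_mem' := by intro β hβ; simp
  smul_mem' := by
    intro r a ha β hβ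
    simp only [Pi.smul_apply, smul_eq_mul, map_mul, mul_assoc, ← Finset.mul_sum]
    rw [ha β hβ, mul_zero]

/-- Cyclic code of length `n` over `F` with complete defining set `Z ⊆ F`. -/
abbrev cyclicCode (F : Type) [Field F] (n : ℕ) (Z : Set F) : Submodule F (Fin n → F) :=
  cyclicCodeOn F F n Z

/-- The dual code of a code `C ⊆ F^n` (under the standard inner product). -/
def dualSet (F : Type) [Field F] (n : ℕ) (C : Set (Fin n → F)) : Set (Fin n → F) :=
  {v | ∀ c ∈ C, ∑ i : Fin n, v i * c i = 0}

open Classical in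
/-- Hamming weight of a vector. -/
def wt {F : Type} [Zero F] {n : ℕ} (c : Fin n → F) : ℕ :=
  (Finset.univ.filter (fun i => c i ≠ 0)).card

/-- `d` is the minimum Hamming distance (= minimum nonzero weight) of the code `C`. -/
def IsMinDist {F : Type} [Zero F] {n : ℕ} (C : Set (Fin n → F)) (d : ℕ) : Prop :=
  (∃ c ∈ C, c ≠ 0 ∧ wt c = d) ∧ ∀ c ∈ C, c ≠ 0 → d ≤ wt c

open Classical in
/-- `C` has `(r, δ)`-locality: every coordinate lies in a recovery set `S` of size
at most `r + δ - 1` such that the punctured code `C|_S` has minimum distance `≥ δ`. -/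
def HasLocality {F : Type} [Zero F] {n : ℕ} (C : Set (Fin n → F)) (r δ : ℕ) : Prop :=
  ∀ i : Fin n, ∃ S : Finset (Fin n), i ∈ S ∧ S.card ≤ r + δ - 1 ∧
    ∀ c ∈ C, ∀ c' ∈ C, (∃ j ∈ S, c j ≠ c' j) →
      δ ≤ (S.filter (fun j => c j ≠ c' j)).card

/-- The polynomial `c₀ + c₁ x + ⋯ + c_{n-1} x^{n-1}` associated to a vector. -/
def vecPoly {F : Type} [Semiring F] {n : ℕ} (c : Fin n → F) : Polynomial F :=
  ∑ i : Fin n, Polynomial.C (c i) * Polynomial.X ^ (i : ℕ)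

/-- The cyclic code of length `n` generated by `g(x)` (a divisor of `x^n - 1`). -/
def codeOfGen (F : Type) [Field F] (n : ℕ) (g : Polynomial F) : Set (Fin n → F) :=
  {c | g ∣ vecPoly c}

/-- Ceiling division `⌈a / b⌉` on naturals. -/
def ceilDiv' (a b : ℕ) : ℕ := (a + b - 1) / b

/-- The code parameters meet the Singleton-like bound for `(r, δ)`-LRCs:
`d = n - k - (⌈k/r⌉ - 1)(δ - 1) + 1`. -/
def SingletonOpt (n k r δ d : ℕ) : Prop :=
  d = n - k - (ceilDiv' k r - 1) * (δ - 1) + 1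

section Aux

variable {F : Type} [Field F] {n : ℕ}

lemma mem_cyclicCode_iff {Z : Set F} {c : Fin n → F} :
    c ∈ cyclicCode F n Z ↔ ∀ β ∈ Z, ∑ i : Fin n, c i * β ^ (i : ℕ) = 0 := by
  constructor
  · intro h β hβ; simpa using h β hβ
  · intro h β hβ; simpa using h β hβ

lemma pow_mod_eq {β : F} (hβ : β ^ n = 1) (a : ℕ) : β ^ a = β ^ (a % n) := by
  conv_lhs => rw [← Nat.div_add_mod a n]
  rw [pow_add, pow_mul, hβ, one_pow, one_mul]

lemma pow_val_sub [NeZero n] {β : F} (hβ : β ^ n = 1) (k t : Fin n) :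
    β ^ ((k - t : Fin n) : ℕ) = β ^ (n - (t : ℕ)) * β ^ (k : ℕ) := by
  have h : ((k - t : Fin n) : ℕ) = (n - (t : ℕ) + (k : ℕ)) % n := by
    rw [Fin.sub_def]
  rw [h, ← pow_mod_eq hβ, pow_add]

lemma shift_mem_cyclicCode [NeZero n] {Z : Set F} (hZ : Z ⊆ {x : F | x ^ n = 1})
    {c : Fin n → F} (hc : c ∈ cyclicCode F n Z) (t : Fin n) :
    (fun j => c (j + t)) ∈ cyclicCode F n Z := by
  rw [mem_cyclicCode_iff] at hc ⊢
  intro β hβ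
  have hβn : β ^ n = 1 := hZ hβ
  have hre : ∑ j : Fin n, c (j + t) * β ^ (j : ℕ)
      = ∑ k : Fin n, c k * β ^ ((k - t : Fin n) : ℕ) := by
    refine Fintype.sum_equiv (Equiv.addRight t) _ _ ?_
    intro j
    simp
  rw [hre]
  have hre2 : ∑ k : Fin n, c k * β ^ ((k - t : Fin n) : ℕ)
      = ∑ k : Fin n, c k * (β ^ (n - (t : ℕ)) * β ^ (k : ℕ)) := by
    apply Finset.sum_congr rfl; intro k _; rw [pow_val_sub hβn]
  rw [hre2]
  have : ∑ k : Fin n, c k * (β ^ (n - (t : ℕ)) * β ^ (k : ℕ))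
      = β ^ (n - (t : ℕ)) * ∑ k : Fin n, c k * β ^ (k : ℕ) := by
    rw [Finset.mul_sum]; apply Finset.sum_congr rfl; intro k _; ring
  rw [this, hc β hβ, mul_zero]

lemma shift_mem_dual [NeZero n] {Z : Set F} (hZ : Z ⊆ {x : F | x ^ n = 1})
    {v : Fin n → F} (hv : v ∈ dualSet F n (cyclicCode F n Z : Set (Fin n → F))) (t : Fin n) :
    (fun j => v (j + t)) ∈ dualSet F n (cyclicCode F n Z : Set (Fin n → F)) := by
  intro c hc
  have hc' : (fun j => c (j + (-t))) ∈ cyclicCode F n Z := shift_mem_cyclicCode hZ hc (-t)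
  have h0 := hv _ hc'
  rw [← h0]
  refine Fintype.sum_equiv (Equiv.addRight t) _ _ ?_
  intro j
  simp [sub_eq_add_neg]

open Classical in
lemma wt_shift [NeZero n] (v : Fin n → F) (t : Fin n) :
    wt (fun j => v (j + t)) = wt v := by
  unfold wt
  refine Finset.card_bij' (fun j _ => j + t) (fun j _ => j - t) ?_ ?_ ?_ ?_ <;>
      intro a ha <;>
      simp only [Finset.mem_filter, Finset.mem_univ, true_and] at ha ⊢
  · exact ha
  · show ¬ v (a - t + t) = 0
    rwa [sub_add_cancel]
  · exact add_sub_cancel_right a t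
  · exact sub_add_cancel a t

lemma prod_mem_cyclicCode {A B : Set F}
    {h u : Fin n → F}
    (hh : h ∈ dualSet F n (cyclicCode F n A : Set (Fin n → F)))
    (hu : u ∈ cyclicCode F n (A * B)) :
    (fun j => h j * u j) ∈ cyclicCode F n B := by
  rw [mem_cyclicCode_iff]
  intro β hβ
  have huβ : (fun j => u j * β ^ (j : ℕ)) ∈ cyclicCode F n A := by
    rw [mem_cyclicCode_iff] at hu ⊢
    intro a ha
    have := hu (a * β) (Set.mul_mem_mul ha hβ)
    rw [← this]
    apply Finset.sum_congr rfl
    intro k _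
    rw [mul_pow]; ring
  have := hh _ huβ
  rw [← this]
  apply Finset.sum_congr rfl
  intro k _
  simp [mul_assoc]

open Classical in
lemma one_le_wt {c : Fin n → F} (hc : c ≠ 0) : 1 ≤ wt c := by
  rw [Nat.one_le_iff_ne_zero]
  intro h0
  apply hc
  funext i
  by_contra hci
  have : i ∈ Finset.univ.filter (fun i => c i ≠ 0) := by
    simp only [Finset.mem_filter, Finset.mem_univ, true_and]
    simpa using hci
  rw [Finset.card_eq_zero.mp h0] at this
  simp at this

end Aux

/-- if `d_A⊥ ≥ d_B` then the cyclic code with complete defining set `AB`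
has `(d_A⊥ - d_B + 1, d_B)`-locality (case `n ∣ q - 1`). -/
theorem stmt6 (F : Type) [Field F] [Fintype F] (n : ℕ) (hn : 0 < n)
    (hdvd : n ∣ Fintype.card F - 1)
    (α : F) (hα : IsPrimitiveRoot α n)
    (A B : Set F) (hA : A ⊆ {x : F | x ^ n = 1}) (hB : B ⊆ {x : F | x ^ n = 1})
    (dA dB : ℕ)
    (hdA : IsMinDist (dualSet F n (cyclicCode F n A : Set (Fin n → F))) dA)
    (hdB : IsMinDist (cyclicCode F n B : Set (Fin n → F)) dB)
    (hge : dB ≤ dA) :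
    HasLocality (cyclicCode F n (A * B) : Set (Fin n → F)) (dA - dB + 1) dB := by
  classical
  haveI : NeZero n := ⟨hn.ne'⟩
  obtain ⟨⟨h₀, hh₀mem, hh₀ne, hh₀wt⟩, _⟩ := hdA
  obtain ⟨⟨cB, _, hcBne, hcBwt⟩, hdBmin⟩ := hdB
  have hdBpos : 1 ≤ dB := hcBwt ▸ one_le_wt hcBne
  intro i
  -- pick a coordinate where h₀ is nonzero and shift it onto i
  obtain ⟨j₀, hj₀⟩ : ∃ j, h₀ j ≠ 0 := by
    by_contra hno
    push_neg at hno
    exact hh₀ne (funext fun j => hno j)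
  set t : Fin n := j₀ - i with ht
  set h : Fin n → F := fun j => h₀ (j + t) with hdefh
  have hhmem : h ∈ dualSet F n (cyclicCode F n A : Set (Fin n → F)) :=
    shift_mem_dual hA hh₀mem t
  have hhi : h i ≠ 0 := by
    have : i + t = j₀ := by rw [ht]; exact add_sub_cancel i j₀
    rw [hdefh]; simpa [this] using hj₀
  set S : Finset (Fin n) := Finset.univ.filter (fun j => h j ≠ 0) with hS
  refine ⟨S, ?_, ?_, ?_⟩
  · simp [hS, hhi]
  · have hcard : S.card = dA := by
      have : S.card = wt h := rfl
      rw [this, hdefh, wt_shift, hh₀wt]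
    rw [hcard]
    omega
  · intro c hc c' hc' ⟨j, hjS, hjne⟩
    set u : Fin n → F := c - c' with hu
    have humem : u ∈ cyclicCode F n (A * B) := Submodule.sub_mem _ hc hc'
    set w : Fin n → F := fun k => h k * u k with hw
    have hwmem : w ∈ cyclicCode F n B := prod_mem_cyclicCode hhmem humem
    have hhj : h j ≠ 0 := by
      rw [hS] at hjS; simpa using hjS
    have huj : u j ≠ 0 := by
      rw [hu]; simpa [sub_eq_zero] using hjne
    have hwne : w ≠ 0 := by
      intro h0
      have : w j = 0 := by rw [h0]; rfl
      exact mul_ne_zero hhj huj (by rwa [hw] at this)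
    have hle : dB ≤ wt w := hdBmin w hwmem hwne
    refine le_trans hle ?_
    unfold wt
    apply Finset.card_le_card
    intro k hk
    simp only [Finset.mem_filter, Finset.mem_univ, true_and] at hk ⊢
    have hk' : h k * u k ≠ 0 := hk
    constructor
    · simp [hS, left_ne_zero_of_mul hk']
    · have : u k ≠ 0 := right_ne_zero_of_mul hk'
      rw [hu] at this
      simpa [sub_eq_zero] using this
end
end

section
/- Let n | q - 1, δ ≥ 2, b coprime to n, and α a primitive n-th root of unity in F_q. Let A = {α^t, α^{t+b}, ..., α^{t+(m-1)b}} ∪ {α^{t+i_1 b}, ..., α^{t+i_s b}} where m - 1 + δ ≤ i_1 < i_2 < ... < i_s ≤ n - δ and i_{ℓ+1} - i_ℓ ≥ δ for all ℓ, and let B = {1, α^b, α^{2b}, ..., α^{(δ-2)b}}. Then the cyclic code C_{AB} with complete defining set AB has dimension k = n - m + 1 - (s+1)(δ-1), and has (d_A⊥ - δ + 1, δ)-locality where d_A⊥ is the minimum distance of the dual of the cyclic code with complete defining set A. Moreover, if ⌈k/r⌉ = s + 1 with r = d_A⊥ - δ + 1, then the minimum distance of C_{AB} equals m + δ - 1 and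 C_{AB} meets the Singleton-like bound d ≤ n - k - (⌈k/r⌉ - 1)(δ - 1) + 1. -/
noncomputable section

open Polynomial
open scoped Pointwise

section Helpers
variable {F : Type} [Field F]

lemma vandermonde_trick {ι : Type*} (T : Finset ι) (u z e : ι → F)
    (hu : ∀ i ∈ T, u i ≠ 0) (hz : ∀ i ∈ T, ∀ j ∈ T, z i = z j → i = j)
    (h : ∀ w < T.card, ∑ i ∈ T, u i * z i ^ w * e i = 0) :
    ∀ i ∈ T, e i = 0 := by
  classical
  set κ := T.card with hκ
  let σ : Fin κ ≃ T := (T.equivFin).symm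
  set M : Matrix (Fin κ) (Fin κ) F := fun w i => z (σ i) ^ (w : ℕ) with hM
  have hdet : M.det ≠ 0 := by
    have hMt : M = (Matrix.vandermonde fun i => z (σ i)).transpose := by
      ext w i; simp [hM, Matrix.vandermonde, Matrix.transpose]
    rw [hMt, Matrix.det_transpose, Matrix.det_vandermonde_ne_zero_iff]
    intro i j hij
    have := hz (σ i) (σ i).2 (σ j) (σ j).2 hij
    exact σ.injective (Subtype.ext this)
  set x : Fin κ → F := fun i => u (σ i) * e (σ i) with hx
  have hmv : M.mulVec x = 0 := by
    funext w
    have hw : (w : ℕ) < T.card := w.2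
    have h0 := h w hw
    rw [Matrix.mulVec, Pi.zero_apply]
    rw [← Finset.sum_coe_sort T (fun i => u i * z i ^ (w : ℕ) * e i)] at h0
    rw [← Equiv.sum_comp σ (fun i => u (i : ι) * z (i : ι) ^ (w:ℕ) * e (i : ι))] at h0
    rw [← h0]
    apply Finset.sum_congr rfl
    intro i _
    show M w i * x i = _
    simp only [hM, hx]
    ring
  have hx0 : x = 0 := by
    have hinj : Function.Injective M.mulVec := by
      rw [Matrix.mulVec_injective_iff_isUnit, Matrix.isUnit_iff_isUnit_det]
      exact hdet.isUnit
    apply hinj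
    rw [hmv, Matrix.mulVec_zero]
  intro i hi
  have h1 := congrFun hx0 (σ.symm ⟨i, hi⟩)
  simp only [hx, Pi.zero_apply, Equiv.apply_symm_apply] at h1
  rcases mul_eq_zero.mp h1 with h' | h'
  · exact absurd h' (hu i hi)
  · exact h'

end Helpers



section Helpers2
variable {F : Type} [Field F] {n : ℕ}

lemma pr_pow_congr {α : F} (hα : IsPrimitiveRoot α n) {a b : ℕ}
    (h : a ≡ b [MOD n]) : α ^ a = α ^ b := by
  rw [pow_eq_pow_mod a hα.pow_eq_one, pow_eq_pow_mod b hα.pow_eq_one,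
    show a % n = b % n from h]

lemma pr_pow_mod_mul {α : F} (hα : IsPrimitiveRoot α n) (p a : ℕ) :
    α ^ (p * (a % n)) = α ^ (p * a) :=
  pr_pow_congr hα (Nat.ModEq.mul_left p (Nat.mod_modEq a n))

lemma pr_pow_mul_inj {α : F} (hn : 0 < n) (hα : IsPrimitiveRoot α n) {b : ℕ}
    (hb : Nat.Coprime b n)
    {x y : ℕ} (hx : x < n) (hy : y < n) (h : α ^ (b * x) = α ^ (b * y)) : x = y := by
  rw [pow_eq_pow_mod (b*x) hα.pow_eq_one, pow_eq_pow_mod (b*y) hα.pow_eq_one] at h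
  have hmod : b * x ≡ b * y [MOD n] :=
    hα.pow_inj (Nat.mod_lt _ hn) (Nat.mod_lt _ hn) h
  have h2 : x ≡ y [MOD n] := Nat.ModEq.cancel_left_of_coprime (by
    have := hb.symm; rwa [Nat.Coprime] at this) hmod
  exact h2.eq_of_lt_of_lt hx hy

/-- The subcode of `C` vanishing on the coordinate set `T`. -/
def vanishOn (C : Submodule F (Fin n → F)) (T : Finset (Fin n)) :
    Submodule F (Fin n → F) where
  carrier := {c | c ∈ C ∧ ∀ i ∈ T, c i = 0}
  add_mem' := by
    rintro a b ⟨haC, ha⟩ ⟨hbC, hb⟩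
    exact ⟨C.add_mem haC hbC, fun i hi => by simp [ha i hi, hb i hi]⟩
  zero_mem' := ⟨C.zero_mem, fun i _ => rfl⟩
  smul_mem' := by
    rintro r a ⟨haC, ha⟩
    exact ⟨C.smul_mem r haC, fun i hi => by simp [ha i hi]⟩

lemma mem_vanishOn {C : Submodule F (Fin n → F)} {T : Finset (Fin n)} {c : Fin n → F} :
    c ∈ vanishOn C T ↔ c ∈ C ∧ ∀ i ∈ T, c i = 0 := Iff.rfl

lemma vanishOn_empty (C : Submodule F (Fin n → F)) : vanishOn C ∅ = C := by
  ext c; simp [mem_vanishOn]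

lemma vanishOn_anti (C : Submodule F (Fin n → F)) {T T' : Finset (Fin n)} (h : T ⊆ T') :
    vanishOn C T' ≤ vanishOn C T := by
  rintro c ⟨hc, hv⟩
  exact ⟨hc, fun i hi => hv i (h hi)⟩

lemma finrank_le_inf_ker {V : Type} [AddCommGroup V] [Module F V] [FiniteDimensional F V]
    (p : Submodule F V) (g : V →ₗ[F] F) :
    Module.finrank F p ≤ Module.finrank F (p ⊓ LinearMap.ker g : Submodule F V) + 1 := by
  have h := (g.domRestrict p).finrank_range_add_finrank_ker
  have h1 : Module.finrank F (LinearMap.range (g.domRestrict p)) ≤ 1 := by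
    have := Submodule.finrank_le (LinearMap.range (g.domRestrict p))
    simpa using this
  have h2 : Module.finrank F (LinearMap.ker (g.domRestrict p)) =
      Module.finrank F (p ⊓ LinearMap.ker g : Submodule F V) := by
    rw [LinearMap.ker_domRestrict, ← Submodule.map_comap_subtype,
      Submodule.finrank_map_subtype_eq]
  omega

lemma finrank_vanishOn_le_insert (C : Submodule F (Fin n → F)) (T : Finset (Fin n))
    (i : Fin n) :
    Module.finrank F (vanishOn C T) ≤ Module.finrank F (vanishOn C (insert i T)) + 1 := by
  have hEq : vanishOn C (insert i T) =
      vanishOn C T ⊓ LinearMap.ker (LinearMap.proj (R := F) (φ := fun _ : Fin n => F) i) := by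
    ext c
    simp only [mem_vanishOn, Submodule.mem_inf, LinearMap.mem_ker, LinearMap.proj_apply,
      Finset.mem_insert]
    constructor
    · rintro ⟨hc, hv⟩
      exact ⟨⟨hc, fun j hj => hv j (Or.inr hj)⟩, hv i (Or.inl rfl)⟩
    · rintro ⟨⟨hc, hv⟩, hi⟩
      refine ⟨hc, fun j hj => ?_⟩
      rcases hj with rfl | hj
      · exact hi
      · exact hv j hj
  rw [hEq]
  exact finrank_le_inf_ker _ _

lemma finrank_vanishOn_le_union (C : Submodule F (Fin n → F)) (T D : Finset (Fin n)) :
    Module.finrank F (vanishOn C T) ≤ Module.finrank F (vanishOn C (T ∪ D)) + D.card := by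
  classical
  induction D using Finset.induction_on generalizing T with
  | empty => rw [Finset.union_empty]; simp
  | @insert i D hiD ih =>
    have h1 := finrank_vanishOn_le_insert C T i
    have h2 := ih (insert i T)
    have : insert i T ∪ D = T ∪ insert i D := by
      ext x; simp only [Finset.mem_insert, Finset.mem_union]; tauto
    rw [this] at h2
    rw [Finset.card_insert_of_notMem hiD]
    omega

lemma vanishOn_exists_ne_zero {C : Submodule F (Fin n → F)} {T : Finset (Fin n)}
    (h : 0 < Module.finrank F (vanishOn C T)) :
    ∃ c, c ∈ C ∧ c ≠ 0 ∧ ∀ i ∈ T, c i = 0 := by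
  have hne : vanishOn C T ≠ ⊥ := by
    intro hbot
    rw [hbot] at h
    simp at h
  obtain ⟨c, hc, hc0⟩ := Submodule.exists_mem_ne_zero_of_ne_bot hne
  exact ⟨c, hc.1, hc0, hc.2⟩

end Helpers2


lemma mem_cyclicCode' {F : Type} [Field F] {n : ℕ} {Z : Set F} {c : Fin n → F} :
    c ∈ cyclicCode F n Z ↔ ∀ β ∈ Z, ∑ i : Fin n, c i * β ^ (i : ℕ) = 0 := by
  show (∀ β ∈ Z, ∑ i : Fin n, algebraMap F F (c i) * β ^ (i : ℕ) = 0) ↔ _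
  simp

lemma wt_eq_card {F : Type} [Zero F] {n : ℕ} (c : Fin n → F)
    [DecidablePred fun i : Fin n => c i ≠ 0] :
    wt c = (Finset.univ.filter fun i => c i ≠ 0).card := by
  unfold wt
  congr 1
  exact Finset.filter_congr_decidable ..

/-- the generic construction of optimal cyclic `(r,δ)`-LRCs of length
`n ∣ q - 1` from the BCH bound (Theorem 4.1 of the paper). -/
theorem stmt7 (F : Type) [Field F] [Fintype F] (n m s b t δ : ℕ)
    (hn : 0 < n) (hm : 0 < m) (hs : 0 < s) (hδ : 2 ≤ δ)
    (hdvd : n ∣ Fintype.card F - 1) (hb : Nat.Coprime b n)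
    (ht : t ≤ n - 1)
    (α : F) (hα : IsPrimitiveRoot α n)
    (idx : Fin s → ℕ)
    (hlow : ∀ l : Fin s, m - 1 + δ ≤ idx l) (hupp : ∀ l : Fin s, idx l ≤ n - δ)
    (hgap : ∀ l : Fin s, ∀ hl : (l : ℕ) + 1 < s, idx l + δ ≤ idx ⟨(l : ℕ) + 1, hl⟩)
    (A B : Set F)
    (hAdef : A = {x : F | ∃ j < m, x = α ^ (t + j * b)} ∪
      {x : F | ∃ l : Fin s, x = α ^ (t + idx l * b)})
    (hBdef : B = {x : F | ∃ j < δ - 1, x = α ^ (j * b)})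
    (dA : ℕ)
    (hdA : IsMinDist (dualSet F n (cyclicCode F n A : Set (Fin n → F))) dA) :
    HasLocality (cyclicCode F n (A * B) : Set (Fin n → F)) (dA - δ + 1) δ ∧
    Module.finrank F (cyclicCode F n (A * B)) = n - m + 1 - (s + 1) * (δ - 1) ∧
    (ceilDiv' (n - m + 1 - (s + 1) * (δ - 1)) (dA - δ + 1) = s + 1 →
      IsMinDist (cyclicCode F n (A * B) : Set (Fin n → F)) (m + δ - 1) ∧
      SingletonOpt n (n - m + 1 - (s + 1) * (δ - 1)) (dA - δ + 1) δ (m + δ - 1)) := by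
    classical
  have hn' : NeZero n := ⟨hn.ne'⟩
  have hαn : α ^ n = 1 := hα.pow_eq_one
  obtain ⟨l₀⟩ : Nonempty (Fin s) := ⟨⟨0, hs⟩⟩
  have hidx_n : ∀ l : Fin s, idx l + δ ≤ n := by
    intro l
    have h1 := hlow l
    have h2 := hupp l
    omega
  have hchain : ∀ l l' : Fin s, (l : ℕ) < (l' : ℕ) → idx l + δ ≤ idx l' := by
    intro l l' hll
    obtain ⟨l, hl⟩ := l
    obtain ⟨l', hl'⟩ := l'
    simp only at hll
    clear hdA hAdef hBdef
    induction l' with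
    | zero => omega
    | succ a ih =>
      rcases Nat.lt_or_ge l a with hla | hla
      · have ha : a < s := by omega
        have := ih ha hla
        have h2 := hgap ⟨a, ha⟩ (by simpa using hl')
        simp only at h2 ⊢
        omega
      · have hla' : l = a := by omega
        subst hla'
        have h2 := hgap ⟨l, by omega⟩ (by simpa using hl')
        simpa using h2
  -- the exponent set
  set E : Finset ℕ := Finset.range (m + δ - 2) ∪
      Finset.univ.biUnion (fun l : Fin s => Finset.Ico (idx l) (idx l + (δ - 1))) with hE
  have hEmem : ∀ e, e ∈ E ↔ (e < m + δ - 2 ∨ ∃ l : Fin s, idx l ≤ e ∧ e < idx l + (δ - 1)) := by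
    intro e
    simp [hE, Finset.mem_union, Finset.mem_range, Finset.mem_biUnion, Finset.mem_Ico]
  have hEn : ∀ e ∈ E, e + 2 ≤ n := by
    intro e he
    rcases (hEmem e).1 he with h | ⟨l, h1, h2⟩
    · have := hlow l₀; have := hidx_n l₀; omega
    · have := hidx_n l; omega
  have hEcard : E.card = m - 1 + (s + 1) * (δ - 1) := by
    have hdisj : Disjoint (Finset.range (m + δ - 2))
        (Finset.univ.biUnion fun l : Fin s => Finset.Ico (idx l) (idx l + (δ - 1))) := by
      rw [Finset.disjoint_left]
      intro x hx hx2
      rw [Finset.mem_range] at hx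
      rw [Finset.mem_biUnion] at hx2
      obtain ⟨l, -, hl⟩ := hx2
      rw [Finset.mem_Ico] at hl
      have := hlow l
      omega
    have hpair : ∀ l ∈ (Finset.univ : Finset (Fin s)), ∀ l' ∈ Finset.univ, l ≠ l' →
        Disjoint (Finset.Ico (idx l) (idx l + (δ - 1))) (Finset.Ico (idx l') (idx l' + (δ - 1))) := by
      intro l _ l' _ hll
      rcases Nat.lt_trichotomy (l : ℕ) (l' : ℕ) with h | h | h
      · have := hchain l l' h
        rw [Finset.disjoint_left]
        intro x hx hx2
        rw [Finset.mem_Ico] at hx hx2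
        omega
      · exact absurd (Fin.ext h) hll
      · have := hchain l' l h
        rw [Finset.disjoint_left]
        intro x hx hx2
        rw [Finset.mem_Ico] at hx hx2
        omega
    rw [hE, Finset.card_union_of_disjoint hdisj, Finset.card_biUnion hpair, Finset.card_range]
    have : ∀ l : Fin s, (Finset.Ico (idx l) (idx l + (δ - 1))).card = δ - 1 := by
      intro l; rw [Nat.card_Ico]; omega
    rw [Finset.sum_congr rfl fun l _ => this l, Finset.sum_const, Finset.card_univ,
      Fintype.card_fin, smul_eq_mul]
    have h3 : (s + 1) * (δ - 1) = s * (δ - 1) + (δ - 1) := by ring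
    omega
  set kk := n - m + 1 - (s + 1) * (δ - 1) with hkk
  have hkkE : kk = n - E.card := by
    rw [hEcard]
    have h1 := hlow l₀
    have h2 := hidx_n l₀
    have h3 : (s + 1) * (δ - 1) = s * (δ - 1) + (δ - 1) := by ring
    have h4 : 1 * (δ - 1) ≤ s * (δ - 1) := Nat.mul_le_mul_right _ hs
    -- n is large enough
    have h5 : m - 1 + (s + 1) * (δ - 1) + 1 ≤ n := by
      have hl : s - 1 < s := by omega
      have h7 := hidx_n ⟨s - 1, hl⟩
      have h10 : ∀ j : ℕ, ∀ hj : j < s, m - 1 + δ + j * δ ≤ idx ⟨j, hj⟩ := by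
        intro j
        induction j with
        | zero => intro hj; simpa using hlow ⟨0, hj⟩
        | succ a ih =>
          intro hj
          have has : a < s := by omega
          have ha := ih has
          have hg : idx ⟨a, has⟩ + δ ≤ idx ⟨a + 1, hj⟩ := hgap ⟨a, has⟩ hj
          have hmul : (a + 1) * δ = a * δ + δ := by ring
          omega
      have h11 := h10 (s - 1) hl
      have hsd : (s - 1) * δ + δ = s * δ := by
        have hs1 : s - 1 + 1 = s := by omega
        calc (s-1) * δ + δ = (s - 1 + 1) * δ := by ring
        _ = s * δ := by rw [hs1]
      have hsd2 : s * (δ - 1) + s * 1 = s * δ := by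
        have hd1 : δ - 1 + 1 = δ := by omega
        calc s * (δ - 1) + s * 1 = s * (δ - 1 + 1) := by ring
        _ = s * δ := by rw [hd1]
      omega
    omega
  have hABE : A * B = {x : F | ∃ e ∈ E, x = α ^ (t + e * b)} := by
    have hmul : ∀ (j u : ℕ), α ^ (t + j * b) * α ^ (u * b) = α ^ (t + (j + u) * b) := by
      intro j u; rw [← pow_add]; congr 1; ring
    ext x
    simp only [Set.mem_setOf_eq]
    constructor
    · intro hx
      rw [Set.mem_mul] at hx
      obtain ⟨a, ha, bb, hbb, hx⟩ := hx
      rw [hBdef] at hbb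
      obtain ⟨u, hu, rfl⟩ := hbb
      rw [hAdef] at ha
      rcases ha with ⟨j, hj, rfl⟩ | ⟨l, rfl⟩
      · exact ⟨j + u, (hEmem _).2 (Or.inl (by omega)), by rw [← hx, hmul]⟩
      · exact ⟨idx l + u, (hEmem _).2 (Or.inr ⟨l, by omega, by omega⟩), by rw [← hx, hmul]⟩
    · rintro ⟨e, he, rfl⟩
      rw [Set.mem_mul]
      rcases (hEmem e).1 he with hlt | ⟨l, h1, h2⟩
      · rcases Nat.lt_or_ge e m with hem | hem
        · refine ⟨α ^ (t + e * b), ?_, α ^ (0 * b), ?_, ?_⟩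
          · rw [hAdef]; exact Or.inl ⟨e, hem, rfl⟩
          · rw [hBdef]; exact ⟨0, by omega, rfl⟩
          · rw [hmul, Nat.add_zero]
        · refine ⟨α ^ (t + (m - 1) * b), ?_, α ^ ((e - (m - 1)) * b), ?_, ?_⟩
          · rw [hAdef]; exact Or.inl ⟨m - 1, by omega, rfl⟩
          · rw [hBdef]; exact ⟨e - (m - 1), by omega, rfl⟩
          · have hee : m - 1 + (e - (m - 1)) = e := by omega
            rw [hmul, hee]
      · refine ⟨α ^ (t + idx l * b), ?_, α ^ ((e - idx l) * b), ?_, ?_⟩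
        · rw [hAdef]; exact Or.inr ⟨l, rfl⟩
        · rw [hBdef]; exact ⟨e - idx l, by omega, rfl⟩
        · have hee : idx l + (e - idx l) = e := by omega
          rw [hmul, hee]
  have hmem : ∀ c : Fin n → F, c ∈ cyclicCode F n (A * B) ↔
      ∀ e ∈ E, ∑ i : Fin n, c i * α ^ ((t + e * b) * (i : ℕ)) = 0 := by
    intro c
    rw [mem_cyclicCode', hABE]
    constructor
    · intro h e he
      have := h (α ^ (t + e * b)) ⟨e, he, rfl⟩
      rw [← this]
      exact Finset.sum_congr rfl fun i _ => by rw [← pow_mul]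
    · rintro h β ⟨e, he, rfl⟩
      rw [← h e he]
      exact Finset.sum_congr rfl fun i _ => by rw [← pow_mul]
  have hdim : Module.finrank F (cyclicCode F n (A * B)) = kk := by
    have hκn : E.card ≤ n - 1 := by
      have hsub : E ⊆ Finset.range (n - 1) := fun e he =>
        Finset.mem_range.2 (by have := hEn e he; omega)
      have := Finset.card_le_card hsub
      rwa [Finset.card_range] at this
    set κ := E.card with hκ
    let σ : Fin κ ≃ E := E.equivFin.symm
    set Bv : Fin κ → F := fun w => α ^ (t + ((σ w : ℕ)) * b) with hBv
    have hα0 : α ≠ 0 := hα.ne_zero hn.ne'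
    have hsplit : ∀ e : ℕ, α ^ (t + e * b) = α ^ t * α ^ (b * e) := by
      intro e; rw [← pow_add]; congr 1; ring
    have hBvinj : Function.Injective Bv := by
      intro w w' hww
      simp only [hBv] at hww
      rw [hsplit, hsplit] at hww
      have h3 := mul_left_cancel₀ (pow_ne_zero t hα0) hww
      have hwn : ((σ w : ℕ)) < n := by have := hEn _ (σ w).2; omega
      have hwn' : ((σ w' : ℕ)) < n := by have := hEn _ (σ w').2; omega
      have h4 := pr_pow_mul_inj hn hα hb hwn hwn' h3
      exact σ.injective (Subtype.ext h4)
    have hVdet : (Matrix.vandermonde Bv).det ≠ 0 := by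
      rw [Matrix.det_vandermonde_ne_zero_iff]; exact hBvinj
    set L : (Fin n → F) →ₗ[F] (Fin κ → F) :=
      { toFun := fun c w => ∑ i : Fin n, c i * Bv w ^ (i : ℕ)
        map_add' := by
          intro c c'; funext w
          simp only [Pi.add_apply, add_mul]
          rw [Finset.sum_add_distrib]
        map_smul' := by
          intro r c; funext w
          simp only [Pi.smul_apply, smul_eq_mul, RingHom.id_apply, mul_assoc]
          rw [← Finset.mul_sum] } with hL
    have hker : LinearMap.ker L = cyclicCode F n (A * B) := by
      ext c
      rw [LinearMap.mem_ker, hmem c]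
      constructor
      · intro h e he
        have h1 := congrFun h (σ.symm ⟨e, he⟩)
        simp only [hL, LinearMap.coe_mk, AddHom.coe_mk, Pi.zero_apply, hBv,
          Equiv.apply_symm_apply] at h1
        rw [← h1]
        exact Finset.sum_congr rfl fun i _ => by rw [← pow_mul]
      · intro h
        funext w
        have h1 := h (σ w) (σ w).2
        simp only [hL, LinearMap.coe_mk, AddHom.coe_mk, Pi.zero_apply, hBv]
        rw [← h1]
        exact Finset.sum_congr rfl fun i _ => by rw [← pow_mul]
    have hsurj : Function.Surjective L := by
      intro y
      have hsv : Function.Surjective (Matrix.vandermonde Bv).mulVec :=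
        Matrix.mulVec_surjective_iff_isUnit.mpr
          ((Matrix.isUnit_iff_isUnit_det _).mpr hVdet.isUnit)
      obtain ⟨x, hx⟩ := hsv y
      refine ⟨fun i => if h : (i : ℕ) < κ then x ⟨(i : ℕ), h⟩ else 0, ?_⟩
      funext w
      show (∑ i : Fin n, (if h : (i : ℕ) < κ then x ⟨(i : ℕ), h⟩ else 0) * Bv w ^ (i : ℕ)) = y w
      have hre := Fin.sum_univ_eq_sum_range
        (fun a => (if h : a < κ then x ⟨a, h⟩ else 0) * Bv w ^ a) n
      rw [hre]
      rw [← Finset.sum_subset (Finset.range_subset_range.2 (by omega : κ ≤ n))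
        (fun a _ ha => by rw [Finset.mem_range] at ha; rw [dif_neg ha, zero_mul])]
      rw [← Fin.sum_univ_eq_sum_range (fun a => (if h : a < κ then x ⟨a, h⟩ else 0) * Bv w ^ a) κ]
      rw [← hx]
      rw [Matrix.mulVec]
      show _ = ∑ j, Matrix.vandermonde Bv w j * x j
      apply Finset.sum_congr rfl
      intro i _
      rw [dif_pos i.2]
      simp only [Matrix.vandermonde]
      rw [mul_comm]
      congr
    have hrn := L.finrank_range_add_finrank_ker
    rw [LinearMap.range_eq_top.mpr hsurj, finrank_top, Module.finrank_fin_fun,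
      Module.finrank_fin_fun] at hrn
    have : Module.finrank F (LinearMap.ker L) = Module.finrank F (cyclicCode F n (A * B)) := by
      rw [hker]
    omega
  have hα0 : α ≠ 0 := hα.ne_zero hn.ne'
  have hzfun : ∀ (D : Finset (Fin n)), ∀ i ∈ D, ∀ j ∈ D,
      α ^ (b * (i : ℕ)) = α ^ (b * (j : ℕ)) → i = j := by
    intro D i _ j _ hij
    exact Fin.ext (pr_pow_mul_inj hn hα hb i.2 j.2 hij)
  have hBCH : ∀ c ∈ cyclicCode F n (A * B), c ≠ 0 → m + δ - 1 ≤ wt c := by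
    intro c hc hc0
    by_contra hlt
    push_neg at hlt
    rw [wt_eq_card] at hlt
    set D := Finset.univ.filter (fun i => c i ≠ 0) with hD
    have hDcard : D.card ≤ m + δ - 2 := by omega
    have hch : ∀ w < D.card, ∑ i ∈ D,
        (fun i : Fin n => α ^ (t * (i : ℕ))) i * (fun i : Fin n => α ^ (b * (i : ℕ))) i ^ w * c i
          = 0 := by
      intro w hw
      have hwE : w ∈ E := (hEmem w).2 (Or.inl (by omega))
      have h0 := (hmem c).1 hc w hwE
      have hterm : ∀ i : Fin n,
          α ^ (t * (i : ℕ)) * (α ^ (b * (i : ℕ))) ^ w * c i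
            = c i * α ^ ((t + w * b) * (i : ℕ)) := by
        intro i
        rw [← pow_mul, ← pow_add, mul_comm]
        congr 2
        ring
      calc ∑ i ∈ D, α ^ (t * (i : ℕ)) * (α ^ (b * (i : ℕ))) ^ w * c i
          = ∑ i : Fin n, α ^ (t * (i : ℕ)) * (α ^ (b * (i : ℕ))) ^ w * c i := by
            apply Finset.sum_subset (Finset.subset_univ D)
            intro x _ hx
            rw [hD, Finset.mem_filter] at hx
            push_neg at hx
            rw [hx (Finset.mem_univ x), mul_zero]
        _ = ∑ i : Fin n, c i * α ^ ((t + w * b) * (i : ℕ)) :=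
            Finset.sum_congr rfl fun i _ => hterm i
        _ = 0 := h0
    have hzero := vandermonde_trick D (fun i => α ^ (t * (i : ℕ)))
      (fun i => α ^ (b * (i : ℕ))) c
      (fun i _ => pow_ne_zero _ hα0) (hzfun D) hch
    obtain ⟨i, hi⟩ := Function.ne_iff.1 hc0
    exact hi (hzero i (by rw [hD, Finset.mem_filter]; exact ⟨Finset.mem_univ _, hi⟩))
  have hAroot : ∀ β ∈ A, ∃ p : ℕ, β = α ^ p := by
    intro β hβ
    rw [hAdef] at hβ
    rcases hβ with ⟨j, _, rfl⟩ | ⟨l, rfl⟩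
    exacts [⟨t + j * b, rfl⟩, ⟨t + idx l * b, rfl⟩]
  obtain ⟨⟨v, hvdual, hv0, hvwt⟩, -⟩ := hdA
  have hvd : ∀ c ∈ cyclicCode F n A, ∑ i : Fin n, v i * c i = 0 := fun c hc =>
    hvdual c hc
  have hcheck : ∀ (j : Fin n) (u : ℕ), u < δ - 1 → ∀ c ∈ cyclicCode F n (A * B),
      ∑ x : Fin n, v (x - j) * α ^ (u * b * (x : ℕ)) * c x = 0 := by
    intro j u hu c hc
    set c'' : Fin n → F := fun i => α ^ (u * b * (((i + j) : Fin n) : ℕ)) * c (i + j)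
      with hc''
    have hc''A : c'' ∈ cyclicCode F n A := by
      rw [mem_cyclicCode']
      intro β hβ
      obtain ⟨p, rfl⟩ := hAroot β hβ
      set G : Fin n → F := fun x => α ^ (u * b * (x : ℕ)) * c x
        * α ^ (p * ((x - j : Fin n) : ℕ)) with hG
      have h1 : ∀ i : Fin n, c'' i * (α ^ p) ^ (i : ℕ) = G (i + j) := by
        intro i
        simp only [hc'', hG, add_sub_cancel_right]
        rw [← pow_mul]
      rw [Finset.sum_congr rfl fun i _ => h1 i]
      rw [Fintype.sum_equiv (Equiv.addRight j) (fun i => G (i + j)) G (fun i => rfl)]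
      have h2 : ∀ x : Fin n, G x
          = α ^ (p * (n - (j : ℕ))) * (c x * (α ^ (u * b + p)) ^ (x : ℕ)) := by
        intro x
        simp only [hG]
        have hsub : ((x - j : Fin n) : ℕ) = ((n - (j : ℕ)) + (x : ℕ)) % n := by
          rw [Fin.sub_def]
        rw [hsub, pr_pow_mod_mul hα p, ← pow_mul]
        rw [show p * ((n - (j : ℕ)) + (x : ℕ)) = p * (x : ℕ) + p * (n - (j : ℕ)) by ring]
        rw [pow_add]
        rw [show (u * b + p) * (x : ℕ) = u * b * (x : ℕ) + p * (x : ℕ) by ring, pow_add]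
        ring
      rw [Finset.sum_congr rfl fun x _ => h2 x, ← Finset.mul_sum]
      have h3 : ∑ x : Fin n, c x * (α ^ (u * b + p)) ^ (x : ℕ) = 0 := by
        have hmemAB : α ^ (u * b + p) ∈ A * B := by
          rw [show α ^ (u * b + p) = α ^ p * α ^ (u * b) by
            rw [← pow_add]; congr 1; ring]
          exact Set.mul_mem_mul hβ (by rw [hBdef]; exact ⟨u, hu, rfl⟩)
        exact (mem_cyclicCode'.1 hc) _ hmemAB
      rw [h3, mul_zero]
    have h4 := hvd c'' hc''A
    set H : Fin n → F := fun x => v (x - j) * α ^ (u * b * (x : ℕ)) * c x with hH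
    have h5 : ∀ i : Fin n, v i * c'' i = H (i + j) := by
      intro i; simp only [hc'', hH, add_sub_cancel_right]; ring
    rw [Finset.sum_congr rfl fun i _ => h5 i,
      Fintype.sum_equiv (Equiv.addRight j) (fun i => H (i + j)) H (fun i => rfl)] at h4
    exact h4
  have hloc : HasLocality (cyclicCode F n (A * B) : Set (Fin n → F)) (dA - δ + 1) δ := by
    intro i₀
    obtain ⟨p₀, hp₀⟩ := Function.ne_iff.1 hv0
    set j := i₀ - p₀ with hj
    set S := Finset.univ.filter (fun x : Fin n => v (x - j) ≠ 0) with hS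
    have hSmem : ∀ x : Fin n, x ∈ S ↔ v (x - j) ≠ 0 := by
      intro x; rw [hS, Finset.mem_filter]; simp
    refine ⟨S, ?_, ?_, ?_⟩
    · rw [hSmem, hj, sub_sub_cancel]
      exact hp₀
    · have hcard : S.card = wt v := by
        rw [wt_eq_card]
        apply Finset.card_bij (fun x _ => x - j)
        · intro x hx
          rw [hSmem] at hx
          rw [Finset.mem_filter]
          exact ⟨Finset.mem_univ _, hx⟩
        · intro x _ y _ hxy
          have := congrArg (· + j) hxy
          simpa [sub_add_cancel] using this
        · intro y hy
          rw [Finset.mem_filter] at hy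
          exact ⟨y + j, by rw [hSmem, add_sub_cancel_right]; exact hy.2,
            by rw [add_sub_cancel_right]⟩
      rw [hcard, hvwt]
      omega
    · intro c hc c' hc' hex
      obtain ⟨x₀, hx₀S, hx₀⟩ := hex
      by_contra hcon
      push_neg at hcon
      set D := S.filter (fun x => c x ≠ c' x) with hD
      have hcD : D.card ≤ δ - 1 := by omega
      rw [SetLike.mem_coe] at hc hc'
      have he : (c - c') ∈ cyclicCode F n (A * B) := Submodule.sub_mem _ hc hc'
      have hch : ∀ w < D.card, ∑ x ∈ D,
          (fun x : Fin n => v (x - j)) x * (fun x : Fin n => α ^ (b * (x : ℕ))) x ^ w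
            * (c - c') x = 0 := by
        intro w hw
        have h0 := hcheck j w (by omega) (c - c') he
        calc ∑ x ∈ D, v (x - j) * (α ^ (b * (x : ℕ))) ^ w * (c - c') x
            = ∑ x : Fin n, v (x - j) * (α ^ (b * (x : ℕ))) ^ w * (c - c') x := by
              apply Finset.sum_subset (Finset.subset_univ D)
              intro x _ hx
              rw [hD, Finset.mem_filter] at hx
              push_neg at hx
              rcases Decidable.em (x ∈ S) with hxS | hxS
              · have : c x = c' x := hx hxS
                have hzero : (c - c') x = 0 := by
                  simp [Pi.sub_apply, this]
                rw [hzero, mul_zero]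
              · rw [hSmem] at hxS
                push_neg at hxS
                rw [hxS, zero_mul, zero_mul]
          _ = ∑ x : Fin n, v (x - j) * α ^ (w * b * (x : ℕ)) * (c - c') x := by
              apply Finset.sum_congr rfl
              intro x _
              rw [← pow_mul]
              congr 2
              ring
          _ = 0 := h0
      have hzero := vandermonde_trick D (fun x => v (x - j))
        (fun x => α ^ (b * (x : ℕ))) (c - c')
        (fun x hx => by
          rw [hD, Finset.mem_filter] at hx
          exact (hSmem x).1 hx.1) (hzfun D) hch
      have hx₀D : x₀ ∈ D := by
        rw [hD, Finset.mem_filter]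
        exact ⟨hx₀S, hx₀⟩
      have := hzero x₀ hx₀D
      rw [Pi.sub_apply, sub_eq_zero] at this
      exact hx₀ this
  refine ⟨hloc, hdim, ?_⟩
  intro hceil
  constructor
  · -- minimum distance is exactly m + δ - 1
    set C := cyclicCode F n (A * B) with hC
    set r := dA - δ + 1 with hr
    have hr1 : 1 ≤ r := by omega
    set kC := Module.finrank F C with hkC
    have hkCkk : kC = kk := hdim
    have hsr : s * r + 1 ≤ kC := by
      have h1 : (kk + r - 1) / r = s + 1 := hceil
      have h2 : (s + 1) * r ≤ kk + r - 1 := by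
        calc (s + 1) * r = (kk + r - 1) / r * r := by rw [h1]
        _ ≤ kk + r - 1 := Nat.div_mul_le_self _ _
      have h3 : (s + 1) * r = s * r + r := by ring
      omega
    have hstep : ∀ T : Finset (Fin n), 0 < Module.finrank F (vanishOn C T) →
        ∃ S : Finset (Fin n), S.card ≤ r + δ - 1 ∧ δ ≤ (S \ T).card ∧
          (∀ D ⊆ S, D.card ≤ δ - 1 → ∀ T' : Finset (Fin n),
            vanishOn C ((T' ∪ S) \ D) = vanishOn C (T' ∪ S)) := by
      intro T hT
      obtain ⟨c, hcC, hc0, hcT⟩ := vanishOn_exists_ne_zero hT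
      obtain ⟨i, hi⟩ := Function.ne_iff.1 hc0
      obtain ⟨S, hiS, hScard, hSd⟩ := hloc i
      have hi' : c i ≠ (0 : Fin n → F) i := by simpa using hi
      have hSfilter : δ ≤ (S.filter (fun x => c x ≠ (0 : Fin n → F) x)).card :=
        hSd c hcC 0 (Submodule.zero_mem _) ⟨i, hiS, hi'⟩
      refine ⟨S, hScard, ?_, ?_⟩
      · refine le_trans hSfilter (Finset.card_le_card ?_)
        intro x hx
        rw [Finset.mem_filter] at hx
        rw [Finset.mem_sdiff]
        refine ⟨hx.1, fun hxT => hx.2 ?_⟩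
        simpa using hcT x hxT
      · intro D hDS hDc T'
        apply le_antisymm
        · rintro g ⟨hgC, hgv⟩
          have hgS : ∀ x ∈ S, g x = 0 := by
            by_contra hcontra
            push_neg at hcontra
            obtain ⟨x, hxS, hgx⟩ := hcontra
            have hgx' : g x ≠ (0 : Fin n → F) x := by simpa using hgx
            have hbig := hSd g hgC 0 (Submodule.zero_mem _) ⟨x, hxS, hgx'⟩
            have hsubD : S.filter (fun y => g y ≠ (0 : Fin n → F) y) ⊆ D := by
              intro y hy
              rw [Finset.mem_filter] at hy
              by_contra hyD
              have hymem : y ∈ (T' ∪ S) \ D :=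
                Finset.mem_sdiff.2 ⟨Finset.mem_union_right _ hy.1, hyD⟩
              exact hy.2 (by simpa using hgv y hymem)
            have := le_trans hbig (Finset.card_le_card hsubD)
            omega
          refine ⟨hgC, fun x hx => ?_⟩
          rcases Finset.mem_union.1 hx with hxT | hxS
          · by_cases hxD : x ∈ D
            · exact hgS x (hDS hxD)
            · exact hgv x (Finset.mem_sdiff.2 ⟨hx, hxD⟩)
          · exact hgS x hxS
        · exact vanishOn_anti C Finset.sdiff_subset
    have greedy : ∀ j : ℕ, j ≤ s → ∃ T : Finset (Fin n),
        T.card ≤ j * (r + δ - 1) ∧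
        kC + j * (δ - 1) ≤ Module.finrank F (vanishOn C T) + T.card ∧
        kC ≤ Module.finrank F (vanishOn C T) + j * r := by
      intro j
      induction j with
      | zero =>
        intro _
        refine ⟨∅, by simp, ?_, ?_⟩
        · rw [vanishOn_empty]; simp only [Finset.card_empty, Nat.zero_mul]; omega
        · rw [vanishOn_empty]; simp only [Nat.zero_mul]; omega
      | succ a ih =>
        intro ha
        obtain ⟨T, hT1, hT2, hT3⟩ := ih (by omega)
        have hpos : 0 < Module.finrank F (vanishOn C T) := by
          have hmul : (a + 1) * r ≤ s * r := Nat.mul_le_mul_right _ ha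
          have hmul2 : (a + 1) * r = a * r + r := by ring
          omega
        obtain ⟨S, hScard, hSnew, hSdet⟩ := hstep T hpos
        obtain ⟨D, hDsub, hDcard⟩ := Finset.exists_subset_card_eq
          (show δ - 1 ≤ (S \ T).card by omega)
        have hDS : D ⊆ S := hDsub.trans Finset.sdiff_subset
        have hdet := hSdet D hDS (by omega) T
        -- counting
        have hTS : (T ∪ S).card = T.card + (S \ T).card := by
          rw [← Finset.card_union_of_disjoint (Finset.disjoint_sdiff :
            Disjoint T (S \ T)), Finset.union_sdiff_self_eq_union]
        have hTsub : T ⊆ (T ∪ S) \ D := by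
          intro x hx
          rw [Finset.mem_sdiff]
          refine ⟨Finset.mem_union_left _ hx, fun hxD => ?_⟩
          have := hDsub hxD
          rw [Finset.mem_sdiff] at this
          exact this.2 hx
        have hcard2 : ((T ∪ S) \ D).card = (T ∪ S).card - (δ - 1) := by
          rw [Finset.card_sdiff_of_subset (hDsub.trans ?_), hDcard]
          intro x hx
          rw [Finset.mem_sdiff] at hx
          exact Finset.mem_union_right _ hx.1
        have hrank : Module.finrank F (vanishOn C T) ≤
            Module.finrank F (vanishOn C (T ∪ S)) + ((T ∪ S) \ D).card - T.card := by
          have h5 := finrank_vanishOn_le_union C T (((T ∪ S) \ D) \ T)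
          rw [Finset.union_sdiff_self_eq_union, Finset.union_eq_right.2 hTsub] at h5
          rw [hdet] at h5
          have h6 : (((T ∪ S) \ D) \ T).card = ((T ∪ S) \ D).card - T.card := by
            rw [Finset.card_sdiff_of_subset hTsub]
          omega
        have hSTcard : (S \ T).card ≤ r + δ - 1 := le_trans
          (Finset.card_le_card Finset.sdiff_subset) hScard
        refine ⟨T ∪ S, ?_, ?_, ?_⟩
        · have : (a + 1) * (r + δ - 1) = a * (r + δ - 1) + (r + δ - 1) := by ring
          have := Finset.card_union_le T S
          omega
        · have hmul : (a + 1) * (δ - 1) = a * (δ - 1) + (δ - 1) := by ring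
          omega
        · have hmul : (a + 1) * r = a * r + r := by ring
          omega
    obtain ⟨T, hT1, hT2, hT3⟩ := greedy s le_rfl
    -- extend T to size kC - 1 + s * (δ - 1)
    have hssum : s * (r + δ - 1) + s ≤ s * r + s * (δ - 1) + s := by
      have : s * (r + δ - 1) ≤ s * (r + (δ - 1)) := Nat.mul_le_mul_left _ (by omega)
      have h2 : s * (r + (δ - 1)) = s * r + s * (δ - 1) := by ring
      omega
    have hτn : kC - 1 + s * (δ - 1) ≤ n := by
      have hkkval : kk = n - (m - 1 + (s + 1) * (δ - 1)) := by rw [hkkE, hEcard]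
      have hEub : m - 1 + (s + 1) * (δ - 1) + 1 ≤ n := by
        have hcard : E.card ≤ n - 1 := by
          have hsub : E ⊆ Finset.range (n - 1) := fun e he =>
            Finset.mem_range.2 (by have := hEn e he; omega)
          have := Finset.card_le_card hsub
          rwa [Finset.card_range] at this
        rw [← hEcard]
        omega
      have h3 : (s + 1) * (δ - 1) = s * (δ - 1) + (δ - 1) := by ring
      omega
    have hTτ : T.card ≤ kC - 1 + s * (δ - 1) := by
      have := le_trans hT1 (by omega : s * (r + δ - 1) ≤ s * r + s * (δ - 1))
      omega
    obtain ⟨T', hTT', hT'card⟩ := Finset.exists_superset_card_eq hTτ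
      (by rw [Fintype.card_fin]; exact hτn)
    have hrankT' : 1 ≤ Module.finrank F (vanishOn C T') := by
      have h5 := finrank_vanishOn_le_union C T (T' \ T)
      rw [Finset.union_sdiff_self_eq_union, Finset.union_eq_right.2 hTT'] at h5
      have h6 : (T' \ T).card = T'.card - T.card := Finset.card_sdiff_of_subset hTT'
      have h7 : T.card ≤ T'.card := Finset.card_le_card hTT'
      omega
    obtain ⟨c, hcC, hc0, hcT'⟩ := vanishOn_exists_ne_zero (C := C) (T := T') (by omega)
    have hwtub : wt c ≤ n - T'.card := by
      rw [wt_eq_card]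
      have hsub : (Finset.univ.filter fun i => c i ≠ 0) ⊆ Finset.univ \ T' := by
        intro x hx
        rw [Finset.mem_filter] at hx
        rw [Finset.mem_sdiff]
        exact ⟨Finset.mem_univ _, fun hxT => hx.2 (hcT' x hxT)⟩
      have := Finset.card_le_card hsub
      rwa [Finset.card_sdiff_of_subset (Finset.subset_univ _), Finset.card_univ,
        Fintype.card_fin] at this
    have hwtval : wt c = m + δ - 1 := by
      have hlb := hBCH c hcC hc0
      have hkkval : kk = n - (m - 1 + (s + 1) * (δ - 1)) := by rw [hkkE, hEcard]
      have hEub : m - 1 + (s + 1) * (δ - 1) + 1 ≤ n := by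
        have hcard : E.card ≤ n - 1 := by
          have hsub : E ⊆ Finset.range (n - 1) := fun e he =>
            Finset.mem_range.2 (by have := hEn e he; omega)
          have := Finset.card_le_card hsub
          rwa [Finset.card_range] at this
        rw [← hEcard]
        omega
      have h3 : (s + 1) * (δ - 1) = s * (δ - 1) + (δ - 1) := by ring
      omega
    exact ⟨⟨c, hcC, hc0, hwtval⟩, fun c' hc' hc'0 => hBCH c' hc' hc'0⟩
  · -- Singleton-like bound arithmetic
    unfold SingletonOpt
    rw [hceil]
    have h1 := hlow l₀
    have h2 := hidx_n l₀
    have h3 : (s + 1) * (δ - 1) = s * (δ - 1) + (δ - 1) := by ring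
    have h5 : m - 1 + (s + 1) * (δ - 1) + 1 ≤ n := by
      rw [← hEcard]; have := hEn _ ((hEmem 0).2 (Or.inl (by omega))); 
      have hcard : E.card ≤ n - 1 := by
        have : E ⊆ Finset.range (n - 1) := by
          intro e he; rw [Finset.mem_range]; have := hEn e he; omega
        calc E.card ≤ (Finset.range (n-1)).card := Finset.card_le_card this
        _ = n - 1 := by rw [Finset.card_range]
      omega
    simp only [Nat.add_sub_cancel]
    omega
end
end
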